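/- Let k be a positive integer, 1 ≤ r ≤ 2+2√(k·ln k), and n = 2k+r. Let A be a family of (k+r−1)-element subsets of [n−1], and let N(A) be the family of all (k−1)-element subsets of [n−1] contained in some member of A. If |A| ≤ \binom{n-2-c}{k+r-1} for some positive integer c, then |N(A)| ≥ |A| · ∏_{j=0}^{r-1} (1 + c/(k−c+j)), i.e., |N(A)| ≥ |A|·(1 + c/(k+r−c−1))·(1 + c/(k+r−c−2))·…·(1 + c/(k−c)). -/

import Mathlib

open Finset Colex
open scoped FinsetFamily

namespace IsoAux

/-- Double counting step: for a family of `t`-sets inside `M`,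
`|ℬ| * t ≤ |∂ℬ| * (|M| - t + 1)`. -/
lemma count_step {ν : ℕ} (M : Finset (Fin ν)) (t : ℕ) (ht : 1 ≤ t) (htM : t ≤ M.card)
    (ℬ : Finset (Finset (Fin ν))) (hsized : ∀ S ∈ ℬ, S.card = t) (hsub : ∀ S ∈ ℬ, S ⊆ M) :
    ℬ.card * t ≤ (∂ ℬ).card * (M.card - t + 1) := by
  classical
  have swap : ∑ S ∈ ℬ, ((∂ ℬ).filter fun T => T ⊆ S).card
      = ∑ T ∈ ∂ ℬ, (ℬ.filter fun S => T ⊆ S).card := by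
    simp_rw [Finset.card_filter]
    exact Finset.sum_comm
  have hS : ∀ S ∈ ℬ, t ≤ ((∂ ℬ).filter fun T => T ⊆ S).card := by
    intro S hSB
    have hsub' : Finset.powersetCard (t-1) S ⊆ (∂ ℬ).filter fun T => T ⊆ S := by
      intro T hT
      rw [Finset.mem_powersetCard] at hT
      refine Finset.mem_filter.2 ⟨?_, hT.1⟩
      exact Finset.mem_shadow_iff_exists_mem_card_add_one.2
        ⟨S, hSB, hT.1, by rw [hsized S hSB, hT.2]; omega⟩
    calc t = (Finset.powersetCard (t-1) S).card := by
            rw [Finset.card_powersetCard, hsized S hSB, Nat.choose_symm ht,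
              Nat.choose_one_right]
      _ ≤ _ := Finset.card_le_card hsub'
  have hT : ∀ T ∈ ∂ ℬ, (ℬ.filter fun S => T ⊆ S).card ≤ M.card - t + 1 := by
    intro T hT
    obtain ⟨S₀, hS₀, hTS₀, hc₀⟩ := Finset.mem_shadow_iff_exists_mem_card_add_one.1 hT
    have hTcard : T.card = t - 1 := by have := hsized S₀ hS₀; omega
    have hTM : T ⊆ M := hTS₀.trans (hsub S₀ hS₀)
    have himg : (ℬ.filter fun S => T ⊆ S) ⊆ (M \ T).image fun x => insert x T := by
      intro S hSf
      obtain ⟨hSB, hTS⟩ := Finset.mem_filter.1 hSf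
      have hone : (S \ T).card = 1 := by
        rw [Finset.card_sdiff_of_subset hTS, hsized S hSB, hTcard]; omega
      obtain ⟨x, hx⟩ := Finset.card_eq_one.1 hone
      have hx' : x ∈ S \ T := hx ▸ Finset.mem_singleton_self x
      have hxS : x ∈ S := (Finset.mem_sdiff.1 hx').1
      have hxT : x ∉ T := (Finset.mem_sdiff.1 hx').2
      refine Finset.mem_image.2 ⟨x, Finset.mem_sdiff.2 ⟨hsub S hSB hxS, hxT⟩, ?_⟩
      refine Finset.eq_of_subset_of_card_le ?_ ?_
      · intro y hy
        rcases Finset.mem_insert.1 hy with rfl | hyT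
        · exact hxS
        · exact hTS hyT
      · rw [Finset.card_insert_of_notMem hxT, hsized S hSB, hTcard]; omega
    calc (ℬ.filter fun S => T ⊆ S).card
        ≤ ((M \ T).image fun x => insert x T).card := Finset.card_le_card himg
      _ ≤ (M \ T).card := Finset.card_image_le
      _ = M.card - T.card := Finset.card_sdiff_of_subset hTM
      _ = M.card - t + 1 := by rw [hTcard]; omega
  calc ℬ.card * t = ∑ _S ∈ ℬ, t := by rw [Finset.sum_const, smul_eq_mul]
    _ ≤ ∑ S ∈ ℬ, ((∂ ℬ).filter fun T => T ⊆ S).card := Finset.sum_le_sum hS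
    _ = ∑ T ∈ ∂ ℬ, (ℬ.filter fun S => T ⊆ S).card := swap
    _ ≤ ∑ _T ∈ ∂ ℬ, (M.card - t + 1) := Finset.sum_le_sum hT
    _ = (∂ ℬ).card * (M.card - t + 1) := by rw [Finset.sum_const, smul_eq_mul]

/-- Iterated counting bound. -/
lemma iter_bound {ν : ℕ} (M : Finset (Fin ν)) :
    ∀ (i t : ℕ) (ℬ : Finset (Finset (Fin ν))), i ≤ t → t ≤ M.card →
      (∀ S ∈ ℬ, S.card = t) → (∀ S ∈ ℬ, S ⊆ M) →
      (ℬ.card : ℝ) * ∏ p ∈ Finset.range i, ((t : ℝ) - p) / ((M.card : ℝ) - t + p + 1)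
        ≤ ((∂^[i] ℬ).card : ℝ)
  | 0, t, ℬ, _, _, _, _ => by simp
  | (i+1), t, ℬ, hit, htM, hsized, hsub => by
    classical
    have ht1 : 1 ≤ t := le_trans (Nat.succ_le_succ (Nat.zero_le i)) hit
    have hshsized : ∀ S ∈ ∂ ℬ, S.card = t - 1 := by
      intro T hT
      obtain ⟨S, hSB, hTS, hcard⟩ := Finset.mem_shadow_iff_exists_mem_card_add_one.1 hT
      have := hsized S hSB; omega
    have hshsub : ∀ S ∈ ∂ ℬ, S ⊆ M := by
      intro T hT
      obtain ⟨S, hSB, hTS, _⟩ := Finset.mem_shadow_iff_exists_mem_card_add_one.1 hT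
      exact hTS.trans (hsub S hSB)
    have ih := iter_bound M i (t-1) (∂ ℬ) (by omega) (by omega) hshsized hshsub
    rw [Nat.cast_sub ht1, Nat.cast_one] at ih
    have hstep := count_step M t ht1 htM ℬ hsized hsub
    set m' : ℝ := (M.card : ℝ) with hm'
    have hm't : (t : ℝ) ≤ m' := by rw [hm']; exact_mod_cast htM
    have hdenpos : (0:ℝ) < m' - t + 1 := by linarith
    have hstepR : (ℬ.card : ℝ) * t ≤ ((∂ ℬ).card : ℝ) * (m' - t + 1) := by
      have : ((ℬ.card * t : ℕ) : ℝ) ≤ (((∂ ℬ).card * (M.card - t + 1) : ℕ) : ℝ) := by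
        exact_mod_cast hstep
      rw [Nat.cast_mul, Nat.cast_mul, Nat.cast_add, Nat.cast_sub htM, Nat.cast_one] at this
      exact this
    set Q : ℝ := ∏ p ∈ Finset.range i, ((t:ℝ) - 1 - p) / (m' - ((t:ℝ) - 1) + p + 1) with hQdef
    have hQ : 0 ≤ Q := by
      refine Finset.prod_nonneg fun p hp => ?_
      have hp' : p < i := Finset.mem_range.1 hp
      have hpt : (p : ℝ) ≤ (t:ℝ) - 1 := by
        have : p + 1 ≤ t := by omega
        have : ((p+1 : ℕ) : ℝ) ≤ (t:ℝ) := by exact_mod_cast this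
        push_cast at this; linarith
      have : (0:ℝ) < m' - ((t:ℝ) - 1) + p + 1 := by
        have hp0 : (0:ℝ) ≤ p := Nat.cast_nonneg p
        linarith
      exact div_nonneg (by linarith) (by linarith)
    have hprod : ∏ p ∈ Finset.range (i+1), ((t : ℝ) - p) / (m' - t + p + 1)
        = Q * ((t:ℝ) / (m' - t + 1)) := by
      rw [Finset.prod_range_succ']
      congr 1
      · refine Finset.prod_congr rfl fun p _ => ?_
        push_cast
        congr 1 <;> ring
      · norm_num
    have hdiv : (ℬ.card : ℝ) * ((t:ℝ) / (m' - t + 1)) ≤ ((∂ ℬ).card : ℝ) := by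
      rw [← mul_div_assoc, div_le_iff₀ hdenpos]
      exact hstepR
    calc (ℬ.card : ℝ) * ∏ p ∈ Finset.range (i+1), ((t : ℝ) - p) / (m' - t + p + 1)
        = ((ℬ.card : ℝ) * ((t:ℝ) / (m' - t + 1))) * Q := by rw [hprod]; ring
      _ ≤ ((∂ ℬ).card : ℝ) * Q := mul_le_mul_of_nonneg_right hdiv hQ
      _ ≤ ((∂^[i] (∂ ℬ)).card : ℝ) := ih
      _ = ((∂^[i+1] ℬ).card : ℝ) := by rw [Function.iterate_succ_apply]

/-- Existence of initial segments of any cardinality inside a given initial segment. -/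
lemma exists_initSeg_card {ν : ℕ} (s : ℕ) :
    ∀ (D : ℕ) (𝒟 : Finset (Finset (Fin ν))), 𝒟.card = D → IsInitSeg 𝒟 s →
      ∀ N, N ≤ D → ∃ 𝒞, 𝒞 ⊆ 𝒟 ∧ 𝒞.card = N ∧ IsInitSeg 𝒞 s
  | 0, 𝒟, hD, h, N, hN => by
    obtain rfl : N = 0 := Nat.le_zero.1 hN
    exact ⟨∅, by simp, by simp, by simp⟩
  | (D+1), 𝒟, hD, h, N, hN => by
    rcases eq_or_lt_of_le hN with rfl | hN'
    · exact ⟨𝒟, Finset.Subset.refl _, hD, h⟩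
    · have hne : 𝒟.Nonempty := Finset.card_pos.1 (by omega)
      obtain ⟨smax, hsmax, rfl⟩ := h.exists_initSeg hne
      have hmem : smax ∈ initSeg smax := mem_initSeg_self
      have hcard' : ((initSeg smax).erase smax).card = D := by
        simp [Finset.card_erase_of_mem hmem, hD]
      have hinit : IsInitSeg ((initSeg smax).erase smax) s := by
        constructor
        · intro u hu; exact h.1 (Finset.mem_of_mem_erase hu)
        · rintro u w hu ⟨hlt, hw⟩
          have hu' := Finset.mem_of_mem_erase hu
          have hw' : w ∈ initSeg smax := h.2 hu' ⟨hlt, hw⟩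
          refine Finset.mem_erase.2 ⟨?_, hw'⟩
          have hus : toColex u ≤ toColex smax := (mem_initSeg.1 hu').2
          have hlt' : toColex w < toColex smax := lt_of_lt_of_le hlt hus
          intro hws
          exact absurd (hws ▸ hlt') (lt_irrefl _)
      obtain ⟨𝒞, h1, h2, h3⟩ := exists_initSeg_card s D _ hcard' hinit N (by omega)
      exact ⟨𝒞, h1.trans (Finset.erase_subset _ _), h2, h3⟩

/-- `powersetCard s` of the first `m` elements of `Fin ν` is an initial segment for colex. -/
lemma isInitSeg_powersetCard {ν m : ℕ} (hm : m ≤ ν) (s : ℕ) :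
    IsInitSeg (Finset.powersetCard s (Finset.attachFin (Finset.range m)
      fun x hx => (Finset.mem_range.1 hx).trans_le hm)) s := by
  constructor
  · intro A hA; exact (Finset.mem_powersetCard.1 hA).2
  · rintro A B hA ⟨hBA, hB⟩
    rw [Finset.mem_powersetCard] at hA ⊢
    refine ⟨fun t ht => ?_, hB⟩
    rw [Finset.mem_attachFin, Finset.mem_range]
    have hlt : toColex (Finset.image Fin.val B) < toColex (Finset.image Fin.val A) := by
      rwa [toColex_image_lt_toColex_image Fin.val_strictMono]
    apply Finset.Colex.forall_lt_mono hlt.le _ _ (Finset.mem_image.2 ⟨t, ht, rfl⟩)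
    rintro x hx
    obtain ⟨a, ha, rfl⟩ := Finset.mem_image.1 hx
    have := hA.1 ha
    rwa [Finset.mem_attachFin, Finset.mem_range] at this

end IsoAux

set_option maxHeartbeats 2000000 in
/-- Isoperimetry (i). For 1 ≤ r ≤ 2+2√(k ln k), n = 2k+r, a family A of
(k+r-1)-subsets of [n-1] with |A| ≤ C(n-2-c, k+r-1) satisfies
|N(A)| ≥ |A| · ∏_{j=0}^{r-1} (1 + c/(k-c+j)), where N(A) is the (k-1)-shadow of A. -/
theorem isoperimetry_shadow_i (k r n c : ℕ) (hk : 1 ≤ k) (hr : 1 ≤ r)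
    (hrub : (r : ℝ) ≤ 2 + 2 * Real.sqrt (k * Real.log k)) (hn : n = 2 * k + r)
    (hc : 0 < c)
    (A : Finset (Finset (Fin (n - 1)))) (hA : ∀ S ∈ A, S.card = k + r - 1)
    (hcard : A.card ≤ (n - 2 - c).choose (k + r - 1)) :
    (A.card : ℝ) * ∏ j ∈ Finset.range r, (1 + (c : ℝ) / ((k : ℝ) - c + j)) ≤
      ((A.biUnion fun S => Finset.powersetCard (k - 1) S).card : ℝ) := by
  classical
  by_cases hA0 : A = ∅
  · simp [hA0]
  have hAne : A.Nonempty := Finset.nonempty_iff_ne_empty.2 hA0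
  set s := k + r - 1 with hs
  set m := n - 2 - c with hm
  -- If the binomial coefficient is nonzero, m ≥ s
  have hms : s ≤ m := by
    by_contra h
    have h0 : m.choose s = 0 := Nat.choose_eq_zero_of_lt (lt_of_not_ge h)
    have : A.card = 0 := by omega
    exact hA0 (Finset.card_eq_zero.1 this)
  have hck : c + 1 ≤ k := by omega
  have hmn : m ≤ n - 1 := by omega
  set M : Finset (Fin (n-1)) := Finset.attachFin (Finset.range m)
    (fun x hx => (Finset.mem_range.1 hx).trans_le hmn) with hM
  have hMcard : M.card = m := by rw [hM, Finset.card_attachFin, Finset.card_range]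
  have hDinit : IsInitSeg (Finset.powersetCard s M) s := IsoAux.isInitSeg_powersetCard hmn s
  have hDcard : (Finset.powersetCard s M).card = m.choose s := by
    rw [Finset.card_powersetCard, hMcard]
  obtain ⟨𝒞, h𝒞D, h𝒞card, h𝒞init⟩ := IsoAux.exists_initSeg_card s (m.choose s)
    (Finset.powersetCard s M) hDcard hDinit A.card hcard
  -- Kruskal–Katona
  have hkk : (∂^[r] 𝒞).card ≤ (∂^[r] A).card := by
    have h := Finset.iterated_kk (k := r) (fun S hS => hA S hS) h𝒞card.le h𝒞init
    convert h
  -- counting bound on 𝒞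
  have h𝒞sized : ∀ S ∈ 𝒞, S.card = s := fun S hS => (Finset.mem_powersetCard.1 (h𝒞D hS)).2
  have h𝒞sub : ∀ S ∈ 𝒞, S ⊆ M := fun S hS => (Finset.mem_powersetCard.1 (h𝒞D hS)).1
  have hbound := IsoAux.iter_bound M r s 𝒞 (by omega) (by omega : s ≤ M.card) h𝒞sized h𝒞sub
  -- identify the shadow with the biUnion
  have hsh : (A.biUnion fun S => Finset.powersetCard (k-1) S) = ∂^[r] A := by
    ext T
    simp only [Finset.mem_biUnion, Finset.mem_powersetCard,
      Finset.mem_shadow_iterate_iff_exists_sdiff]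
    constructor
    · rintro ⟨S, hS, hTS, hT⟩
      refine ⟨S, hS, hTS, ?_⟩
      have h1 := hA S hS
      have h2 := Finset.card_sdiff_of_subset hTS
      omega
    · rintro ⟨S, hS, hTS, hd⟩
      refine ⟨S, hS, hTS, ?_⟩
      have h1 := hA S hS
      have h2 := Finset.card_sdiff_of_subset hTS
      have h3 : T.card ≤ S.card := Finset.card_le_card hTS
      omega
  -- product equality
  have hprodeq : ∏ j ∈ Finset.range r, (1 + (c : ℝ) / ((k : ℝ) - c + j))
      = ∏ p ∈ Finset.range r, ((s : ℝ) - p) / ((M.card : ℝ) - s + p + 1) := by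
    have hsR : (s : ℝ) = (k : ℝ) + r - 1 := by
      rw [hs]; rw [Nat.cast_sub (by omega : 1 ≤ k + r)]; push_cast; ring
    have hmR : (M.card : ℝ) = 2 * k + r - 2 - c := by
      rw [hMcard, hm, hn]
      rw [Nat.cast_sub (by omega : c ≤ 2 * k + r - 2), Nat.cast_sub (by omega : 2 ≤ 2 * k + r)]
      push_cast; ring
    have hkc : ∀ j : ℕ, (0:ℝ) < (k : ℝ) - c + j := by
      intro j
      have : ((c : ℝ)) + 1 ≤ k := by exact_mod_cast hck
      have : (0:ℝ) ≤ (j:ℝ) := Nat.cast_nonneg j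
      linarith
    have lhs_eq : ∏ j ∈ Finset.range r, (1 + (c : ℝ) / ((k : ℝ) - c + j))
        = (∏ j ∈ Finset.range r, ((k : ℝ) + j)) / ∏ j ∈ Finset.range r, ((k : ℝ) - c + j) := by
      rw [← Finset.prod_div_distrib]
      refine Finset.prod_congr rfl fun j _ => ?_
      have := hkc j
      field_simp
      ring
    have rhs_eq : ∏ p ∈ Finset.range r, ((s : ℝ) - p) / ((M.card : ℝ) - s + p + 1)
        = (∏ p ∈ Finset.range r, ((k : ℝ) + r - 1 - p)) / ∏ p ∈ Finset.range r, ((k : ℝ) - c + p) := by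
      rw [← Finset.prod_div_distrib]
      refine Finset.prod_congr rfl fun p _ => ?_
      rw [hsR, hmR]
      congr 1 <;> ring
    have hnum : ∏ p ∈ Finset.range r, ((k : ℝ) + r - 1 - p)
        = ∏ j ∈ Finset.range r, ((k : ℝ) + j) := by
      have hrefl := Finset.prod_range_reflect (fun j => (k : ℝ) + j) r
      rw [← hrefl]
      refine Finset.prod_congr rfl fun p hp => ?_
      have hp' : p < r := Finset.mem_range.1 hp
      rw [Nat.cast_sub (by omega : p ≤ r - 1), Nat.cast_sub (by omega : 1 ≤ r)]
      push_cast; ring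
    rw [lhs_eq, rhs_eq, hnum]
  -- final chain
  rw [hprodeq, hsh, ← h𝒞card]
  calc (𝒞.card : ℝ) * ∏ p ∈ Finset.range r, ((s : ℝ) - p) / ((M.card : ℝ) - s + p + 1)
      ≤ ((∂^[r] 𝒞).card : ℝ) := hbound
    _ ≤ ((∂^[r] A).card : ℝ) := by exact_mod_cast hkk
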